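/- Let k be a field of characteristic different from 2 and let t, s ∈ k satisfy t·s·γ₁·γ₂·γ₃·γ₄ ≠ 0, where γ₁ = 2s²−1, γ₂ = t−s, γ₃ = 2ts−1, γ₄ = 2t²−1. Consider the three diagonal quadratic forms in the six variables x_0,…,x_5: Q₁ = x_1² − 2t²x_2² + γ₄x_3² − 2γ₄x_0², Q₂ = t²s·x_2² − tsγ₂·x_3² − ts²·x_4² + γ₂·x_0², Q₃ = γ₁x_3² − 2s²x_4² + x_5² − 2γ₁x_0². Then every nonzero k-linear combination λ₁Q₁ + λ₂Q₂ + λ₃Q₃ has rank at least 4, i.e., at least four of its six diagonal coefficients are nonzero. (Equivalently, no quadric of rank at most three contains the Kummer surface 𝒳_{t,s}.) -/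

import Mathlib

/-- Diagonal coefficients (in the variables `x₀,…,x₅`) of the Klein quadric
`Q₁ = x₁² − 2t²x₂² + γ₄x₃² − 2γ₄x₀²`, where `γ₄ = 2t² − 1`. -/
def kleinQ1 {k : Type*} [Field k] (t s : k) : Fin 6 → k :=
  ![-2 * (2 * t ^ 2 - 1), 1, -2 * t ^ 2, 2 * t ^ 2 - 1, 0, 0]

/-- Diagonal coefficients of the Klein quadric
`Q₂ = t²s·x₂² − tsγ₂·x₃² − ts²·x₄² + γ₂·x₀²`, where `γ₂ = t − s`. -/
def kleinQ2 {k : Type*} [Field k] (t s : k) : Fin 6 → k :=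
  ![t - s, 0, t ^ 2 * s, -(t * s * (t - s)), -(t * s ^ 2), 0]

/-- Diagonal coefficients of the Klein quadric
`Q₃ = γ₁x₃² − 2s²x₄² + x₅² − 2γ₁x₀²`, where `γ₁ = 2s² − 1`. -/
def kleinQ3 {k : Type*} [Field k] (t s : k) : Fin 6 → k :=
  ![-2 * (2 * s ^ 2 - 1), 0, 0, 2 * s ^ 2 - 1, -2 * s ^ 2, 1]

/-- If a predicate on `Fin 6` holds at four distinct points, the filter has
cardinality at least `4`. -/
lemma kummer_aux_card {P : Fin 6 → Prop} [DecidablePred P]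
    (i j m n : Fin 6) (hc : ({i, j, m, n} : Finset (Fin 6)).card = 4)
    (hi : P i) (hj : P j) (hm : P m) (hn : P n) :
    4 ≤ (Finset.univ.filter P).card := by
  rw [← hc]
  apply Finset.card_le_card
  intro x hx
  simp only [Finset.mem_insert, Finset.mem_singleton] at hx
  rcases hx with rfl | rfl | rfl | rfl <;> simp [Finset.mem_filter, *]

open scoped Classical in
/-- No quadric of rank at most three contains the Kummer surface `𝒳_{t,s}`:
over a field of characteristic `≠ 2`, if `t·s·γ₁·γ₂·γ₃·γ₄ ≠ 0`, then every
nonzero linear combination `λ₁Q₁ + λ₂Q₂ + λ₃Q₃` of the three Klein quadrics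
has at least four nonzero diagonal coefficients. -/
theorem kummer_no_rank_three_quadric {k : Type*} [Field k] (h2 : (2 : k) ≠ 0)
    (t s : k)
    (hts : t * s * (2 * s ^ 2 - 1) * (t - s) * (2 * t * s - 1)
      * (2 * t ^ 2 - 1) ≠ 0) :
    ∀ l₁ l₂ l₃ : k, ¬ (l₁ = 0 ∧ l₂ = 0 ∧ l₃ = 0) →
      4 ≤ (Finset.univ.filter (fun j : Fin 6 =>
        l₁ * kleinQ1 t s j + l₂ * kleinQ2 t s j + l₃ * kleinQ3 t s j ≠ 0)).card := by
  simp only [ne_eq, mul_eq_zero, not_or] at hts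
  obtain ⟨⟨⟨⟨⟨ht, hs⟩, hg1⟩, hg2⟩, hg3⟩, hg4⟩ := hts
  intro l₁ l₂ l₃ hl
  have E0 : l₁ * kleinQ1 t s 0 + l₂ * kleinQ2 t s 0 + l₃ * kleinQ3 t s 0 =
      (-2*(2*t^2-1))*l₁ + (t-s)*l₂ + (-2*(2*s^2-1))*l₃ := by
    norm_num [kleinQ1, kleinQ2, kleinQ3]; ring
  have E1 : l₁ * kleinQ1 t s 1 + l₂ * kleinQ2 t s 1 + l₃ * kleinQ3 t s 1 = l₁ := by
    norm_num [kleinQ1, kleinQ2, kleinQ3]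
  have E2 : l₁ * kleinQ1 t s 2 + l₂ * kleinQ2 t s 2 + l₃ * kleinQ3 t s 2 =
      (-2*t^2)*l₁ + (t^2*s)*l₂ := by
    rw [show kleinQ1 t s 2 = -2 * t ^ 2 from rfl, show kleinQ2 t s 2 = t ^ 2 * s from rfl,
      show kleinQ3 t s 2 = 0 from rfl]; ring
  have E3 : l₁ * kleinQ1 t s 3 + l₂ * kleinQ2 t s 3 + l₃ * kleinQ3 t s 3 =
      (2*t^2-1)*l₁ + (-(t*s*(t-s)))*l₂ + (2*s^2-1)*l₃ := by
    rw [show kleinQ1 t s 3 = 2 * t ^ 2 - 1 from rfl, show kleinQ2 t s 3 = -(t * s * (t - s)) from rfl,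
      show kleinQ3 t s 3 = 2 * s ^ 2 - 1 from rfl]; ring
  have E4 : l₁ * kleinQ1 t s 4 + l₂ * kleinQ2 t s 4 + l₃ * kleinQ3 t s 4 =
      (-(t*s^2))*l₂ + (-2*s^2)*l₃ := by
    rw [show kleinQ1 t s 4 = 0 from rfl, show kleinQ2 t s 4 = -(t * s ^ 2) from rfl,
      show kleinQ3 t s 4 = -2 * s ^ 2 from rfl]; ring
  have E5 : l₁ * kleinQ1 t s 5 + l₂ * kleinQ2 t s 5 + l₃ * kleinQ3 t s 5 = l₃ := by
    rw [show kleinQ1 t s 5 = 0 from rfl, show kleinQ2 t s 5 = 0 from rfl,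
      show kleinQ3 t s 5 = 1 from rfl]; ring
  by_cases hl2 : l₂ = 0
  · by_cases hl1 : l₁ = 0
    · -- T1 : only l₃ ≠ 0 ; witnesses {0,3,4,5}
      have hl3 : l₃ ≠ 0 := fun h => hl ⟨hl1, hl2, h⟩
      refine kummer_aux_card 0 3 4 5 (by decide) ?_ ?_ ?_ ?_
      · simp only [E0]; intro h
        exact (mul_ne_zero hl3 (mul_ne_zero h2 hg1))
          (by linear_combination -h - 2*(2*t^2-1)*hl1 + (t-s)*hl2)
      · simp only [E3]; intro h
        exact (mul_ne_zero hl3 hg1)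
          (by linear_combination h - (2*t^2-1)*hl1 + (t*s*(t-s))*hl2)
      · simp only [E4]; intro h
        exact (mul_ne_zero hl3 (mul_ne_zero h2 (pow_ne_zero 2 hs)))
          (by linear_combination -h - (t*s^2)*hl2)
      · simp only [E5]; exact hl3
    · by_cases hl3 : l₃ = 0
      · -- T2 : only l₁ ≠ 0 ; witnesses {0,1,2,3}
        refine kummer_aux_card 0 1 2 3 (by decide) ?_ ?_ ?_ ?_
        · simp only [E0]; intro h
          exact (mul_ne_zero hl1 (mul_ne_zero h2 hg4))
            (by linear_combination -h + (t-s)*hl2 - 2*(2*s^2-1)*hl3)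
        · simp only [E1]; exact hl1
        · simp only [E2]; intro h
          exact (mul_ne_zero hl1 (mul_ne_zero h2 (pow_ne_zero 2 ht)))
            (by linear_combination -h + (t^2*s)*hl2)
        · simp only [E3]; intro h
          exact (mul_ne_zero hl1 hg4)
            (by linear_combination h + (t*s*(t-s))*hl2 - (2*s^2-1)*hl3)
      · -- T3 : l₁ ≠ 0, l₃ ≠ 0 ; witnesses {1,2,4,5}
        refine kummer_aux_card 1 2 4 5 (by decide) ?_ ?_ ?_ ?_
        · simp only [E1]; exact hl1
        · simp only [E2]; intro h
          exact (mul_ne_zero hl1 (mul_ne_zero h2 (pow_ne_zero 2 ht)))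
            (by linear_combination -h + (t^2*s)*hl2)
        · simp only [E4]; intro h
          exact (mul_ne_zero hl3 (mul_ne_zero h2 (pow_ne_zero 2 hs)))
            (by linear_combination -h - (t*s^2)*hl2)
        · simp only [E5]; exact hl3
  · -- l₂ ≠ 0
    by_cases hl1 : l₁ = 0
    · by_cases hl3 : l₃ = 0
      · -- T4 : witnesses {0,2,3,4}
        refine kummer_aux_card 0 2 3 4 (by decide) ?_ ?_ ?_ ?_
        · simp only [E0]; intro h
          exact (mul_ne_zero hl2 hg2)
            (by linear_combination h + 2*(2*t^2-1)*hl1 + 2*(2*s^2-1)*hl3)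
        · simp only [E2]; intro h
          exact (mul_ne_zero hl2 (mul_ne_zero (pow_ne_zero 2 ht) hs))
            (by linear_combination h + 2*t^2*hl1)
        · simp only [E3]; intro h
          exact (mul_ne_zero hl2 (mul_ne_zero (mul_ne_zero ht hs) hg2))
            (by linear_combination -h + (2*t^2-1)*hl1 + (2*s^2-1)*hl3)
        · simp only [E4]; intro h
          exact (mul_ne_zero hl2 (mul_ne_zero ht (pow_ne_zero 2 hs)))
            (by linear_combination -h - 2*s^2*hl3)
      · by_cases hc4 : (-(t*s^2))*l₂ + (-2*s^2)*l₃ = 0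
        · -- T5 : witnesses {0,2,3,5}
          refine kummer_aux_card 0 2 3 5 (by decide) ?_ ?_ ?_ ?_
          · simp only [E0]; intro h
            exact (mul_ne_zero hl2 (mul_ne_zero (pow_ne_zero 3 hs) hg3))
              (by linear_combination s^2*h - (2*s^2-1)*hc4 + 2*(2*t^2-1)*s^2*hl1)
          · simp only [E2]; intro h
            exact (mul_ne_zero hl2 (mul_ne_zero (pow_ne_zero 2 ht) hs))
              (by linear_combination h + 2*t^2*hl1)
          · simp only [E3]; intro h
            exact (mul_ne_zero hl2 (mul_ne_zero (mul_ne_zero ht (pow_ne_zero 2 hs)) hg3))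
              (by linear_combination -2*s^2*h - (2*s^2-1)*hc4 + 2*(2*t^2-1)*s^2*hl1)
          · simp only [E5]; exact hl3
        · by_cases hc0 : (-2*(2*t^2-1))*l₁ + (t-s)*l₂ + (-2*(2*s^2-1))*l₃ = 0
          · -- T6 : witnesses {2,3,4,5}
            refine kummer_aux_card 2 3 4 5 (by decide) ?_ ?_ ?_ ?_
            · simp only [E2]; intro h
              exact (mul_ne_zero hl2 (mul_ne_zero (pow_ne_zero 2 ht) hs))
                (by linear_combination h + 2*t^2*hl1)
            · simp only [E3]; intro h
              exact (mul_ne_zero hl2 (mul_ne_zero hg2 hg3))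
                (by linear_combination -hc0 - 2*h)
            · simp only [E4]; exact hc4
            · simp only [E5]; exact hl3
          · -- T7 : witnesses {0,2,4,5}
            refine kummer_aux_card 0 2 4 5 (by decide) ?_ ?_ ?_ ?_
            · simp only [E0]; exact hc0
            · simp only [E2]; intro h
              exact (mul_ne_zero hl2 (mul_ne_zero (pow_ne_zero 2 ht) hs))
                (by linear_combination h + 2*t^2*hl1)
            · simp only [E4]; exact hc4
            · simp only [E5]; exact hl3
    · -- l₂ ≠ 0, l₁ ≠ 0
      by_cases hl3 : l₃ = 0
      · by_cases hc2 : (-2*t^2)*l₁ + (t^2*s)*l₂ = 0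
        · -- T8 : witnesses {0,1,3,4}
          refine kummer_aux_card 0 1 3 4 (by decide) ?_ ?_ ?_ ?_
          · simp only [E0]; intro h
            exact (mul_ne_zero hl2 (mul_ne_zero (mul_ne_zero h2 (pow_ne_zero 3 ht)) hg3))
              (by linear_combination -2*t^2*h + 2*(2*t^2-1)*hc2 - 4*t^2*(2*s^2-1)*hl3)
          · simp only [E1]; exact hl1
          · simp only [E3]; intro h
            exact (mul_ne_zero hl2 (mul_ne_zero (mul_ne_zero (pow_ne_zero 2 ht) hs) hg3))
              (by linear_combination 2*t^2*h + (2*t^2-1)*hc2 - 2*t^2*(2*s^2-1)*hl3)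
          · simp only [E4]; intro h
            exact (mul_ne_zero hl2 (mul_ne_zero ht (pow_ne_zero 2 hs)))
              (by linear_combination -h - 2*s^2*hl3)
        · by_cases hc0 : (-2*(2*t^2-1))*l₁ + (t-s)*l₂ + (-2*(2*s^2-1))*l₃ = 0
          · -- T9 : witnesses {1,2,3,4}
            refine kummer_aux_card 1 2 3 4 (by decide) ?_ ?_ ?_ ?_
            · simp only [E1]; exact hl1
            · simp only [E2]; exact hc2
            · simp only [E3]; intro h
              exact (mul_ne_zero hl2 (mul_ne_zero hg2 hg3))
                (by linear_combination -hc0 - 2*h)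
            · simp only [E4]; intro h
              exact (mul_ne_zero hl2 (mul_ne_zero ht (pow_ne_zero 2 hs)))
                (by linear_combination -h - 2*s^2*hl3)
          · -- T10 : witnesses {0,1,2,4}
            refine kummer_aux_card 0 1 2 4 (by decide) ?_ ?_ ?_ ?_
            · simp only [E0]; exact hc0
            · simp only [E1]; exact hl1
            · simp only [E2]; exact hc2
            · simp only [E4]; intro h
              exact (mul_ne_zero hl2 (mul_ne_zero ht (pow_ne_zero 2 hs)))
                (by linear_combination -h - 2*s^2*hl3)
      · -- l₁, l₂, l₃ all nonzero
        by_cases hc2 : (-2*t^2)*l₁ + (t^2*s)*l₂ = 0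
        · by_cases hc4 : (-(t*s^2))*l₂ + (-2*s^2)*l₃ = 0
          · -- T11 : witnesses {0,1,3,5}
            refine kummer_aux_card 0 1 3 5 (by decide) ?_ ?_ ?_ ?_
            · simp only [E0]; intro h
              exact (mul_ne_zero hl2 (mul_ne_zero (mul_ne_zero
                  (mul_ne_zero h2 (pow_ne_zero 3 ht)) (pow_ne_zero 3 hs)) hg2))
                (by linear_combination -t^2*s^2*h + (2*t^2-1)*s^2*hc2 + (2*s^2-1)*t^2*hc4)
            · simp only [E1]; exact hl1
            · simp only [E3]; intro h
              exact (mul_ne_zero hl2 (mul_ne_zero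
                  (mul_ne_zero (pow_ne_zero 2 ht) (pow_ne_zero 2 hs)) hg2))
                (by linear_combination 2*t^2*s^2*h + (2*t^2-1)*s^2*hc2 + (2*s^2-1)*t^2*hc4)
            · simp only [E5]; exact hl3
          · by_cases hc0 : (-2*(2*t^2-1))*l₁ + (t-s)*l₂ + (-2*(2*s^2-1))*l₃ = 0
            · -- T12 : witnesses {1,3,4,5}
              refine kummer_aux_card 1 3 4 5 (by decide) ?_ ?_ ?_ ?_
              · simp only [E1]; exact hl1
              · simp only [E3]; intro h
                exact (mul_ne_zero hl2 (mul_ne_zero hg2 hg3))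
                  (by linear_combination -hc0 - 2*h)
              · simp only [E4]; exact hc4
              · simp only [E5]; exact hl3
            · -- T13 : witnesses {0,1,4,5}
              refine kummer_aux_card 0 1 4 5 (by decide) ?_ ?_ ?_ ?_
              · simp only [E0]; exact hc0
              · simp only [E1]; exact hl1
              · simp only [E4]; exact hc4
              · simp only [E5]; exact hl3
        · by_cases hc0 : (-2*(2*t^2-1))*l₁ + (t-s)*l₂ + (-2*(2*s^2-1))*l₃ = 0
          · -- T14 : witnesses {1,2,3,5}
            refine kummer_aux_card 1 2 3 5 (by decide) ?_ ?_ ?_ ?_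
            · simp only [E1]; exact hl1
            · simp only [E2]; exact hc2
            · simp only [E3]; intro h
              exact (mul_ne_zero hl2 (mul_ne_zero hg2 hg3))
                (by linear_combination -hc0 - 2*h)
            · simp only [E5]; exact hl3
          · -- T15 : witnesses {0,1,2,5}
            refine kummer_aux_card 0 1 2 5 (by decide) ?_ ?_ ?_ ?_
            · simp only [E0]; exact hc0
            · simp only [E1]; exact hl1
            · simp only [E2]; exact hc2
            · simp only [E5]; exact hl3
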